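/- For every n ≥ 0, the following identity holds in the polynomial ring ℤ[x,y,s]: A_{n+1}(x,y,s) = Σ_{i=0}^{n} Σ_{j=0}^{⌊(n−i)/2⌋} γ_{n,i,j} · (s+y)^i · (2xy)^j · (x+y)^{n−i−2j}, where γ_{n,i,j} are the integers determined by the recurrence γ_{n+1,i,j} = γ_{n,i−1,j} + (1+i)·γ_{n,i+1,j−1} + j·γ_{n,i,j} + (n−i−2j+2)·γ_{n,i,j−1}, with initial conditions γ_{0,0,0} = 1, γ_{0,i,j} = 0 for (i,j) ≠ (0,0), and the convention γ_{n,i,j} = 0 whenever i < 0 or j < 0. -/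

import Mathlib

open Finset MvPolynomial

/-- The word `π(1)π(2)⋯π(n)` of a permutation, as a function on 0-based positions. -/
def permWord {n : ℕ} (π : Equiv.Perm (Fin n)) (i : ℕ) : ℕ :=
  if h : i < n then ((π ⟨i, h⟩ : Fin n) : ℕ) + 1 else 0

/-- Number of descents. -/
def desNum {n : ℕ} (π : Equiv.Perm (Fin n)) : ℕ :=
  ((range (n - 1)).filter fun i => permWord π (i + 1) < permWord π i).card

/-- Number of big ascents. -/
def bascNum {n : ℕ} (π : Equiv.Perm (Fin n)) : ℕ :=
  ((range (n - 1)).filter fun i => permWord π i + 2 ≤ permWord π (i + 1)).card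

/-- Number of successions. -/
def sucNum {n : ℕ} (π : Equiv.Perm (Fin n)) : ℕ :=
  ((range (n - 1)).filter fun i => permWord π (i + 1) = permWord π i + 1).card

/-- The trivariate Eulerian polynomial `A_n(x,y,s) ∈ ℤ[x,y,s]`, where
`x = X 0`, `y = X 1`, `s = X 2`. -/
noncomputable def trivEuler (n : ℕ) : MvPolynomial (Fin 3) ℤ :=
  ∑ π : Equiv.Perm (Fin n), X 0 ^ bascNum π * X 1 ^ desNum π * X 2 ^ sucNum π

/-- The numbers `γ_{n,i,j}`: zero for negative `i` or `j`, with `γ_{0,0,0} = 1`,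
`γ_{0,i,j} = 0` for `(i,j) ≠ (0,0)`, and the recurrence
`γ_{n+1,i,j} = γ_{n,i−1,j} + (1+i)γ_{n,i+1,j−1} + jγ_{n,i,j} + (n−i−2j+2)γ_{n,i,j−1}`. -/
def gam : ℕ → ℤ → ℤ → ℤ
  | 0, i, j => if i = 0 ∧ j = 0 then 1 else 0
  | n + 1, i, j =>
      if i < 0 ∨ j < 0 then 0
      else gam n (i - 1) j + (1 + i) * gam n (i + 1) (j - 1) + j * gam n i j +
        ((n : ℤ) - i - 2 * j + 2) * gam n i (j - 1)

abbrev R3 := MvPolynomial (Fin 3) ℤ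

/-- pair weight of pair `i` -/
noncomputable def pw {m : ℕ} (σ : Equiv.Perm (Fin m)) (i : ℕ) : R3 :=
  if permWord σ (i+1) < permWord σ i then X 1
  else if permWord σ (i+1) = permWord σ i + 1 then X 2
  else X 0

noncomputable def W {m : ℕ} (σ : Equiv.Perm (Fin m)) : R3 := ∏ i ∈ range (m-1), pw σ i

lemma permWord_pos {m : ℕ} (σ : Equiv.Perm (Fin m)) {i : ℕ} (h : i < m) :
    1 ≤ permWord σ i := by simp [permWord, h]

lemma permWord_le {m : ℕ} (σ : Equiv.Perm (Fin m)) {i : ℕ} (h : i < m) :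
    permWord σ i ≤ m := by
  simp only [permWord, dif_pos h]
  exact Nat.succ_le_of_lt (σ ⟨i, h⟩).isLt

lemma permWord_ne {m : ℕ} (σ : Equiv.Perm (Fin m)) {i j : ℕ} (hi : i < m) (hj : j < m)
    (hij : i ≠ j) : permWord σ i ≠ permWord σ j := by
  simp only [permWord, dif_pos hi, dif_pos hj]
  intro h
  have : σ ⟨i, hi⟩ = σ ⟨j, hj⟩ := Fin.ext (by omega)
  exact hij (by simpa [Fin.ext_iff] using σ.injective this)

lemma weight_eq {m : ℕ} (σ : Equiv.Perm (Fin m)) :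
    X 0 ^ bascNum σ * X 1 ^ desNum σ * X 2 ^ sucNum σ = W σ := by
  have hsplit := Finset.prod_filter_mul_prod_filter_not (range (m-1))
    (fun i => permWord σ (i+1) < permWord σ i) (pw σ)
  have hsplit2 := Finset.prod_filter_mul_prod_filter_not
    ((range (m-1)).filter fun i => ¬ permWord σ (i+1) < permWord σ i)
    (fun i => permWord σ (i+1) = permWord σ i + 1) (pw σ)
  rw [W, ← hsplit, ← hsplit2]
  have h1 : ∏ i ∈ (range (m-1)).filter (fun i => permWord σ (i+1) < permWord σ i), pw σ i
      = X 1 ^ desNum σ := by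
    rw [desNum, ← Finset.prod_const]
    refine Finset.prod_congr rfl fun i hi => ?_
    simp only [mem_filter] at hi
    simp [pw, hi.2]
  have h2 : ∏ i ∈ (((range (m-1)).filter fun i => ¬ permWord σ (i+1) < permWord σ i).filter
      fun i => permWord σ (i+1) = permWord σ i + 1), pw σ i = X 2 ^ sucNum σ := by
    rw [sucNum, ← Finset.prod_const]
    refine Finset.prod_congr ?_ fun i hi => ?_
    · ext i
      simp only [mem_filter, mem_range]
      constructor
      · rintro ⟨⟨h1, _⟩, h2⟩; exact ⟨h1, h2⟩
      · rintro ⟨h1, h2⟩; exact ⟨⟨h1, by omega⟩, h2⟩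
    · simp only [mem_filter, mem_range] at hi
      rw [pw, if_neg (by omega), if_pos hi.2]
  have h3 : ∏ i ∈ (((range (m-1)).filter fun i => ¬ permWord σ (i+1) < permWord σ i).filter
      fun i => ¬ permWord σ (i+1) = permWord σ i + 1), pw σ i = X 0 ^ bascNum σ := by
    rw [bascNum, ← Finset.prod_const]
    refine Finset.prod_congr ?_ fun i hi => ?_
    · ext i
      simp only [mem_filter, mem_range]
      constructor
      · rintro ⟨⟨h1, h2⟩, h3⟩
        refine ⟨h1, ?_⟩
        have hne := permWord_ne σ (by omega : i + 1 < m) (by omega : i < m) (by omega)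
        omega
      · rintro ⟨h1, h2⟩
        exact ⟨⟨h1, by omega⟩, by omega⟩
    · simp only [mem_filter, mem_range] at hi
      rw [pw, if_neg (by omega), if_neg (by omega)]
  rw [h1, h2, h3]; ring

section
variable {m : ℕ}

def ins {m : ℕ} (σ : Equiv.Perm (Fin m)) (k : Fin (m+1)) : Equiv.Perm (Fin (m+1)) :=
  (finSuccEquiv' k).trans ((Equiv.optionCongr σ).trans (finSuccEquiv' (Fin.last m)).symm)

lemma ins_apply_self (σ : Equiv.Perm (Fin m)) (k : Fin (m+1)) : ins σ k k = Fin.last m := by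
  simp [ins, finSuccEquiv'_at]

lemma ins_apply_succAbove (σ : Equiv.Perm (Fin m)) (k : Fin (m+1)) (j : Fin m) :
    ins σ k (k.succAbove j) = (σ j).castSucc := by
  simp [ins, finSuccEquiv'_succAbove, finSuccEquiv'_symm_some, Fin.succAbove_last]

lemma ins_bijective (m : ℕ) :
    Function.Bijective (fun p : Equiv.Perm (Fin m) × Fin (m+1) => ins p.1 p.2) := by
  rw [Fintype.bijective_iff_injective_and_card]
  constructor
  · rintro ⟨σ, k⟩ ⟨σ', k'⟩ h
    simp only at h
    have hk : k = k' := by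
      have h1 : ins σ k k = Fin.last m := ins_apply_self σ k
      have h2 : ins σ k k' = Fin.last m := by rw [h]; exact ins_apply_self σ' k'
      exact (Equiv.injective _ (h1.trans h2.symm))
    subst hk
    have hσ : σ = σ' := by
      ext j
      have h2 : (σ j).castSucc = (σ' j).castSucc := by
        rw [← ins_apply_succAbove σ k j, h, ins_apply_succAbove]
      exact congrArg Fin.val (Fin.castSucc_injective _ h2)
    simp [hσ]
  · simp [Fintype.card_perm, Fintype.card_prod, Nat.factorial_succ, Nat.mul_comm]
end

lemma permWord_ins_lt {m : ℕ} (σ : Equiv.Perm (Fin m)) (k : Fin (m+1)) {i : ℕ} (h : i < k.val) :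
    permWord (ins σ k) i = permWord σ i := by
  have him : i < m := by have := k.isLt; omega
  have hi1 : i < m + 1 := by omega
  rw [permWord, dif_pos hi1, permWord, dif_pos him]
  have hpos : (⟨i, hi1⟩ : Fin (m+1)) = k.succAbove ⟨i, him⟩ := by
    rw [Fin.succAbove_of_castSucc_lt _ _ (by simpa [Fin.lt_def] using h)]
    rfl
  rw [hpos, ins_apply_succAbove]
  simp

lemma permWord_ins_self {m : ℕ} (σ : Equiv.Perm (Fin m)) (k : Fin (m+1)) :
    permWord (ins σ k) k.val = m + 1 := by
  rw [permWord, dif_pos k.isLt]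
  have : (⟨k.val, k.isLt⟩ : Fin (m+1)) = k := rfl
  rw [this, ins_apply_self]
  simp [Fin.last]

lemma permWord_ins_gt {m : ℕ} (σ : Equiv.Perm (Fin m)) (k : Fin (m+1)) {i : ℕ}
    (h1 : k.val < i) (h2 : i < m + 1) :
    permWord (ins σ k) i = permWord σ (i-1) := by
  have him : i - 1 < m := by omega
  rw [permWord, dif_pos h2, permWord, dif_pos him]
  have hpos : (⟨i, h2⟩ : Fin (m+1)) = k.succAbove ⟨i-1, him⟩ := by
    rw [Fin.succAbove_of_le_castSucc _ _ (by simp [Fin.le_def]; omega)]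
    simp [Fin.succ, Fin.ext_iff]
    omega
  rw [hpos, ins_apply_succAbove]
  simp

lemma trivEuler_eq_sum_ins (m : ℕ) :
    trivEuler (m+1) = ∑ σ : Equiv.Perm (Fin m), ∑ k : Fin (m+1), W (ins σ k) := by
  have h1 : trivEuler (m+1) = ∑ τ : Equiv.Perm (Fin (m+1)), W τ := by
    rw [trivEuler]; exact Fintype.sum_congr _ _ fun τ => weight_eq τ
  rw [h1]
  rw [show (∑ σ : Equiv.Perm (Fin m), ∑ k : Fin (m+1), W (ins σ k))
      = ∑ p : Equiv.Perm (Fin m) × Fin (m+1), W (ins p.1 p.2) from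
    (Fintype.sum_prod_type fun p => W (ins p.1 p.2)).symm]
  exact (Fintype.sum_bijective (fun p : Equiv.Perm (Fin m) × Fin (m+1) => ins p.1 p.2)
    (ins_bijective m) (fun p => W (ins p.1 p.2)) W (fun p => rfl)).symm

lemma pw_ins_shift_lt {m : ℕ} (σ : Equiv.Perm (Fin (m+1))) (k : Fin (m+2)) {i : ℕ}
    (h : i + 1 < k.val) : pw (ins σ k) i = pw σ i := by
  rw [pw, pw, permWord_ins_lt σ k (show i + 1 < k.val from h),
    permWord_ins_lt σ k (show i < k.val by omega)]

lemma pw_ins_shift_gt {m : ℕ} (σ : Equiv.Perm (Fin (m+1))) (k : Fin (m+2)) {i : ℕ}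
    (h1 : k.val < i) (h2 : i + 1 < m + 2) : pw (ins σ k) i = pw σ (i-1) := by
  have hi : i - 1 + 1 = i := by omega
  rw [pw, pw, permWord_ins_gt σ k (show k.val < i + 1 by omega) h2,
    permWord_ins_gt σ k h1 (by omega), hi]
  simp only [Nat.add_sub_cancel]

lemma W_ins_zero {m : ℕ} (σ : Equiv.Perm (Fin (m+1))) :
    W (ins σ (0 : Fin (m+2))) = X 1 * W σ := by
  rw [W, show m + 2 - 1 = m + 1 from rfl, Finset.prod_range_succ']
  have h0 : pw (ins σ (0 : Fin (m+2))) 0 = X 1 := by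
    have w1 : permWord (ins σ (0 : Fin (m+2))) (0+1) = permWord σ 0 := by
      have := permWord_ins_gt σ (0 : Fin (m+2)) (i := 1) (by norm_num) (by omega)
      simpa using this
    have w0 : permWord (ins σ (0 : Fin (m+2))) 0 = m + 2 := by
      simpa using permWord_ins_self σ (0 : Fin (m+2))
    rw [pw, w1, w0, if_pos (by have := permWord_le σ (Nat.succ_pos m); omega)]
  have hsh : ∀ i ∈ range m, pw (ins σ (0 : Fin (m+2))) (i + 1) = pw σ i := by
    intro i hi
    simp only [mem_range] at hi
    have := pw_ins_shift_gt σ (0 : Fin (m+2)) (i := i+1) (by simp) (by omega)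
    simpa using this
  rw [Finset.prod_congr rfl hsh, h0, W, show m + 1 - 1 = m from rfl]
  ring

lemma W_ins_last {m : ℕ} (σ : Equiv.Perm (Fin (m+1))) :
    W (ins σ ((Fin.last m).succ)) =
      (if permWord σ m = m + 1 then X 2 else X 0) * W σ := by
  have hval : ((Fin.last m).succ : Fin (m+2)).val = m + 1 := by simp [Fin.last]
  rw [W, show m + 2 - 1 = m + 1 from rfl, Finset.prod_range_succ]
  have hsh : ∀ i ∈ range m, pw (ins σ ((Fin.last m).succ)) i = pw σ i := by
    intro i hi
    simp only [mem_range] at hi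
    exact pw_ins_shift_lt σ _ (by omega)
  have hm : pw (ins σ ((Fin.last m).succ)) m =
      (if permWord σ m = m + 1 then X 2 else X 0) := by
    have w1 : permWord (ins σ ((Fin.last m).succ)) (m+1) = m + 2 := by
      have := permWord_ins_self σ ((Fin.last m).succ)
      rwa [hval] at this
    have w0 : permWord (ins σ ((Fin.last m).succ)) m = permWord σ m :=
      permWord_ins_lt σ _ (by omega)
    rw [pw, w1, w0, if_neg (by have := permWord_le σ (Nat.lt_succ_self m); omega)]
    by_cases hc : permWord σ m = m + 1
    · rw [if_pos (by omega), if_pos hc]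
    · rw [if_neg (by omega), if_neg hc]
  rw [Finset.prod_congr rfl hsh, hm, W, show m + 1 - 1 = m from rfl]
  ring

lemma W_ins_mid {m : ℕ} (σ : Equiv.Perm (Fin (m+1))) (k : Fin m) :
    W (ins σ (k.castSucc.succ)) =
      (if permWord σ k.val = m + 1 then X 2 else X 0) * X 1 *
        ∏ i ∈ (range m).erase k.val, pw σ i := by
  set s : Fin (m+2) := k.castSucc.succ with hs
  have hsval : s.val = k.val + 1 := by simp [hs]
  have hkm : k.val < m := k.isLt
  rw [W, show m + 2 - 1 = m + 1 from rfl]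
  rw [← Finset.mul_prod_erase (range (m+1)) _ (Finset.mem_range.mpr (by omega : k.val < m + 1))]
  rw [← Finset.mul_prod_erase _ _
    (Finset.mem_erase.mpr ⟨by omega, Finset.mem_range.mpr (by omega : k.val + 1 < m + 1)⟩)]
  have hk : pw (ins σ s) k.val = (if permWord σ k.val = m + 1 then X 2 else X 0) := by
    have w1 : permWord (ins σ s) (k.val + 1) = m + 2 := by
      have := permWord_ins_self σ s
      rwa [hsval] at this
    have w0 : permWord (ins σ s) k.val = permWord σ k.val :=
      permWord_ins_lt σ s (by omega)
    rw [pw, w1, w0, if_neg (by have := permWord_le σ (by omega : k.val < m + 1); omega)]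
    by_cases hc : permWord σ k.val = m + 1
    · rw [if_pos (by omega), if_pos hc]
    · rw [if_neg (by omega), if_neg hc]
  have hk1 : pw (ins σ s) (k.val + 1) = X 1 := by
    have w1 : permWord (ins σ s) (k.val + 1 + 1) = permWord σ (k.val + 1) := by
      have := permWord_ins_gt σ s (i := k.val + 2) (by omega) (by omega)
      simpa using this
    have w0 : permWord (ins σ s) (k.val + 1) = m + 2 := by
      have := permWord_ins_self σ s
      rwa [hsval] at this
    rw [pw, w1, w0, if_pos (by have := permWord_le σ (by omega : k.val + 1 < m + 1); omega)]
  have hrest : ∏ i ∈ ((range (m+1)).erase k.val).erase (k.val + 1), pw (ins σ s) i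
      = ∏ i ∈ (range m).erase k.val, pw σ i := by
    refine Finset.prod_nbij' (fun i => if i < k.val then i else i - 1)
      (fun j => if j < k.val then j else j + 1) ?_ ?_ ?_ ?_ ?_
    · intro a ha
      simp only [Finset.mem_erase, Finset.mem_range] at ha ⊢
      split_ifs <;> omega
    · intro a ha
      simp only [Finset.mem_erase, Finset.mem_range] at ha ⊢
      split_ifs <;> omega
    · intro a ha
      simp only [Finset.mem_erase, Finset.mem_range] at ha
      split_ifs <;> omega
    · intro a ha
      simp only [Finset.mem_erase, Finset.mem_range] at ha
      split_ifs <;> omega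
    · intro a ha
      simp only [Finset.mem_erase, Finset.mem_range] at ha
      by_cases hlt : a < k.val
      · rw [if_pos hlt]
        exact pw_ins_shift_lt σ s (by omega)
      · rw [if_neg hlt]
        exact pw_ins_shift_gt σ s (by omega) (by omega)
  rw [hk, hk1, hrest, mul_assoc]

lemma sum_ins (m : ℕ) (σ : Equiv.Perm (Fin (m+1))) :
    ∑ k : Fin (m+2), W (ins σ k) =
      (X 1 + X 2) * W σ +
        X 0 * X 1 * ∑ p ∈ range m, ∏ i ∈ (range m).erase p, pw σ i := by
  rw [Fin.sum_univ_succ, Fin.sum_univ_castSucc]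
  rw [W_ins_zero, W_ins_last]
  have hmid : ∀ k : Fin m, W (ins σ (k.castSucc.succ)) =
      (fun p => (if permWord σ p = m + 1 then X 2 else X 0) * X 1 *
        ∏ i ∈ (range m).erase p, pw σ i) k.val := fun k => W_ins_mid σ k
  rw [Fintype.sum_congr _ _ hmid, Fin.sum_univ_eq_sum_range
    (fun p => (if permWord σ p = m + 1 then X 2 else X 0) * X 1 *
      ∏ i ∈ (range m).erase p, pw σ i) m]
  by_cases hend : permWord σ m = m + 1
  · rw [if_pos hend]
    have hothers : ∀ p ∈ range m,
        (if permWord σ p = m + 1 then X 2 else X 0) * X 1 *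
          ∏ i ∈ (range m).erase p, pw σ i
        = X 0 * X 1 * ∏ i ∈ (range m).erase p, pw σ i := by
      intro p hp
      simp only [mem_range] at hp
      have hne : permWord σ p ≠ permWord σ m := permWord_ne σ (by omega) (by omega) (by omega)
      rw [if_neg (by omega)]
    rw [Finset.sum_congr rfl hothers, ← Finset.mul_sum]
    ring
  · rw [if_neg hend]
    set q : Fin (m+1) := σ.symm (Fin.last m) with hq
    have hqw : permWord σ q.val = m + 1 := by
      rw [permWord, dif_pos q.isLt]
      have : (⟨q.val, q.isLt⟩ : Fin (m+1)) = q := rfl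
      rw [this, hq]
      simp [Fin.last]
    have hqm : q.val ≠ m := fun h => hend (by rw [h] at hqw; exact hqw)
    have hqmem : q.val ∈ range m := mem_range.mpr (by have := q.isLt; omega)
    rw [← Finset.add_sum_erase _ _ hqmem, ← Finset.add_sum_erase _ _ hqmem]
    have hothers : ∀ p ∈ (range m).erase q.val,
        (if permWord σ p = m + 1 then X 2 else X 0) * X 1 *
          ∏ i ∈ (range m).erase p, pw σ i
        = X 0 * X 1 * ∏ i ∈ (range m).erase p, pw σ i := by
      intro p hp
      simp only [Finset.mem_erase, mem_range] at hp
      have hne : permWord σ p ≠ permWord σ q.val :=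
        permWord_ne σ (by omega) (by omega) hp.1
      rw [if_neg (by omega)]
    rw [Finset.sum_congr rfl hothers, if_pos hqw]
    have hWq : W σ = pw σ q.val * ∏ i ∈ (range m).erase q.val, pw σ i := by
      rw [W, show m + 1 - 1 = m from rfl, Finset.mul_prod_erase _ _ hqmem]
    have hpwq : pw σ q.val = X 1 := by
      have hlt : permWord σ (q.val + 1) < permWord σ q.val := by
        have h1 : permWord σ (q.val + 1) ≤ m + 1 := permWord_le σ (by omega)
        have h2 : permWord σ (q.val + 1) ≠ permWord σ q.val :=
          permWord_ne σ (by omega) (by omega) (by omega)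
        omega
      rw [pw, if_pos hlt]
    rw [hWq, hpwq, ← Finset.mul_sum]
    ring

noncomputable def Δ (p : R3) : R3 := pderiv 0 p + pderiv 1 p + pderiv 2 p

lemma Δ_mul (p q : R3) : Δ (p * q) = Δ p * q + p * Δ q := by
  simp only [Δ, pderiv_mul]; ring

lemma Δ_X (t : Fin 3) : Δ (X t) = 1 := by
  fin_cases t <;> simp [Δ, pderiv_X] <;> rfl

lemma Δ_pow (p : R3) (k : ℕ) : Δ (p ^ k) = (k : R3) * p ^ (k-1) * Δ p := by
  simp only [Δ, pderiv_pow]; ring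

lemma Δ_sum {ι : Type*} (s : Finset ι) (f : ι → R3) :
    Δ (∑ i ∈ s, f i) = ∑ i ∈ s, Δ (f i) := by
  simp only [Δ, map_sum, Finset.sum_add_distrib]

lemma Δ_prod (s : Finset ℕ) (f : ℕ → R3) (hf : ∀ i ∈ s, Δ (f i) = 1) :
    Δ (∏ i ∈ s, f i) = ∑ p ∈ s, ∏ i ∈ s.erase p, f i := by
  induction s using Finset.induction_on with
  | empty => simp [Δ]
  | @insert a s ha ih =>
    rw [Finset.prod_insert ha, Δ_mul, hf a (Finset.mem_insert_self a s),
      ih (fun i hi => hf i (Finset.mem_insert_of_mem hi)), Finset.sum_insert ha,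
      Finset.erase_insert ha, one_mul]
    congr 1
    rw [Finset.mul_sum]
    refine Finset.sum_congr rfl fun p hp => ?_
    rw [Finset.erase_insert_of_ne (by rintro rfl; exact ha hp),
      Finset.prod_insert (fun h => ha (Finset.mem_of_mem_erase h))]

lemma Δ_pw {m : ℕ} (σ : Equiv.Perm (Fin m)) (i : ℕ) : Δ (pw σ i) = 1 := by
  rw [pw]; split_ifs <;> exact Δ_X _

lemma trivEuler_W (m : ℕ) : trivEuler (m+1) = ∑ σ : Equiv.Perm (Fin (m+1)), W σ := by
  rw [trivEuler]; exact Fintype.sum_congr _ _ fun σ => weight_eq σ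

lemma recur (m : ℕ) :
    trivEuler (m + 2) = (X 1 + X 2) * trivEuler (m+1) + X 0 * X 1 * Δ (trivEuler (m+1)) := by
  rw [trivEuler_eq_sum_ins (m+1)]
  have h1 : ∀ σ : Equiv.Perm (Fin (m+1)), ∑ k : Fin (m+2), W (ins σ k)
      = (X 1 + X 2) * W σ + X 0 * X 1 * Δ (W σ) := by
    intro σ
    rw [sum_ins m σ]
    congr 2
    rw [W, show m + 1 - 1 = m from rfl, Δ_prod _ _ (fun i _ => Δ_pw σ i)]
  rw [Fintype.sum_congr _ _ h1, Finset.sum_add_distrib, ← Finset.mul_sum, ← Finset.mul_sum,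
    ← Δ_sum, ← trivEuler_W]

lemma Δ_add (p q : R3) : Δ (p + q) = Δ p + Δ q := by
  simp only [Δ, map_add]; ring

lemma Δ_C (a : ℤ) : Δ (C a) = 0 := by simp [Δ]

lemma Δ_C_mul (a : ℤ) (p : R3) : Δ (C a * p) = C a * Δ p := by
  rw [Δ_mul, Δ_C, zero_mul, zero_add]

lemma gam_neg {n : ℕ} {i j : ℤ} (h : i < 0 ∨ j < 0) : gam n i j = 0 := by
  cases n with
  | zero => rw [gam, if_neg (by rintro ⟨rfl, rfl⟩; omega)]
  | succ n => rw [gam, if_pos h]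

lemma gam_succ (n : ℕ) (i j : ℤ) (hi : 0 ≤ i) (hj : 0 ≤ j) :
    gam (n+1) i j = gam n (i - 1) j + (1 + i) * gam n (i + 1) (j - 1) + j * gam n i j +
      ((n : ℤ) - i - 2 * j + 2) * gam n i (j - 1) := by
  rw [gam, if_neg (by omega)]

lemma gam_support (n : ℕ) : ∀ {i j : ℤ}, (n : ℤ) < i + 2 * j → gam n i j = 0 := by
  induction n with
  | zero =>
    intro i j h
    rw [gam, if_neg (by rintro ⟨rfl, rfl⟩; omega)]
  | succ n ih =>
    intro i j h
    by_cases hneg : i < 0 ∨ j < 0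
    · exact gam_neg hneg
    · push_neg at hneg
      push_cast at h
      rw [gam_succ n i j (by omega) (by omega),
        ih (i := i - 1) (j := j) (by omega),
        ih (i := i + 1) (j := j - 1) (by omega),
        ih (i := i) (j := j) (by omega)]
      rcases eq_or_ne ((n : ℤ) - i - 2 * j + 2) 0 with h0 | h0
      · rw [h0]; ring
      · rw [ih (i := i) (j := j - 1) (by omega)]; ring

lemma gam_support' (n i j : ℕ) (h : n < i + 2*j) : gam n (i:ℤ) (j:ℤ) = 0 :=
  gam_support n (by push_cast; omega)

noncomputable def Bp (n i j : ℕ) : R3 :=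
  (X 2 + X 1) ^ i * ((2 : R3) * X 0 * X 1) ^ j * (X 0 + X 1) ^ (n - i - 2 * j)

noncomputable def Srect (n : ℕ) : R3 :=
  ∑ i ∈ range (n+1), ∑ j ∈ range (n+1), C (gam n i j) * Bp n i j

lemma triangle_eq_rect (n : ℕ) :
    (∑ i ∈ range (n+1), ∑ j ∈ range ((n - i)/2 + 1), C (gam n i j) * Bp n i j) = Srect n := by
  rw [Srect]
  refine Finset.sum_congr rfl fun i hi => ?_
  simp only [mem_range] at hi
  refine Finset.sum_subset ?_ ?_
  · intro j hj
    simp only [mem_range] at *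
    omega
  · intro j hj hj2
    simp only [mem_range] at hj hj2
    rw [gam_support' n i j (by omega), map_zero, zero_mul]

lemma Δ_u : Δ (X 2 + X 1) = 2 := by
  rw [Δ_add, Δ_X, Δ_X]; norm_num

lemma Δ_w : Δ (X 0 + X 1) = 2 := by
  rw [Δ_add, Δ_X, Δ_X]; norm_num

lemma Δ_two : Δ (2 : R3) = 0 := by
  have : (2 : R3) = C 2 := by norm_num
  rw [this, Δ_C]

lemma Δ_v : Δ ((2:R3) * X 0 * X 1) = 2 * (X 0 + X 1) := by
  rw [Δ_mul, Δ_mul, Δ_two, Δ_X, Δ_X]; ring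

lemma step_term (n i j : ℕ) (h : i + 2*j ≤ n) :
    (X 1 + X 2) * Bp n i j + X 0 * X 1 * Δ (Bp n i j) =
      Bp (n+1) (i+1) j + (i : R3) * Bp (n+1) (i-1) (j+1) + (j : R3) * Bp (n+1) i j +
        ((n - i - 2*j : ℕ) : R3) * Bp (n+1) i (j+1) := by
  have hB : Δ (Bp n i j) =
      ((i:R3) * (X 2 + X 1)^(i-1) * 2) * (((2:R3)*X 0*X 1)^j * (X 0 + X 1)^(n-i-2*j))
      + (X 2 + X 1)^i * (((j:R3) * ((2:R3)*X 0*X 1)^(j-1) * (2*(X 0+X 1))) *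
            (X 0 + X 1)^(n-i-2*j)
        + ((2:R3)*X 0*X 1)^j * (((n-i-2*j:ℕ):R3) * (X 0 + X 1)^(n-i-2*j-1) * 2)) := by
    rw [Bp, mul_assoc, Δ_mul, Δ_mul, Δ_pow, Δ_pow, Δ_pow, Δ_u, Δ_v, Δ_w]
    try ring
  rw [hB]
  have e1 : Bp (n+1) (i+1) j =
      (X 2 + X 1)^(i+1) * ((2:R3)*X 0*X 1)^j * (X 0+X 1)^(n-i-2*j) := by
    rw [Bp, show n+1-(i+1)-2*j = n-i-2*j from by omega]
  have e3 : Bp (n+1) i j =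
      (X 2 + X 1)^i * ((2:R3)*X 0*X 1)^j * (X 0+X 1)^(n-i-2*j+1) := by
    rw [Bp, show n+1-i-2*j = n-i-2*j+1 from by omega]
  have e4 : Bp (n+1) i (j+1) =
      (X 2 + X 1)^i * ((2:R3)*X 0*X 1)^(j+1) * (X 0+X 1)^(n-i-2*j-1) := by
    rw [Bp, show n+1-i-2*(j+1) = n-i-2*j-1 from by omega]
  rw [e1, e3, e4, Bp]
  rcases i with _ | i'
  · rcases j with _ | j'
    · push_cast
      try ring
    · simp only [Nat.add_sub_cancel]
      push_cast
      try ring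
  · have e2 : Bp (n+1) (i'+1-1) (j+1) =
        (X 2 + X 1)^i' * ((2:R3)*X 0*X 1)^(j+1) * (X 0+X 1)^(n-(i'+1)-2*j) := by
      simp only [Nat.add_sub_cancel]
      rw [Bp, show n+1-i'-2*(j+1) = n-(i'+1)-2*j from by omega]
    rw [e2]
    rcases j with _ | j'
    · simp only [Nat.add_sub_cancel]
      push_cast
      try ring
    · simp only [Nat.add_sub_cancel]
      push_cast
      try ring

lemma L1eq (n : ℕ) :
    (∑ i ∈ range (n+2), ∑ j ∈ range (n+2), C (gam n ((i:ℤ)-1) (j:ℤ)) * Bp (n+1) i j)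
  = ∑ i ∈ range (n+1), ∑ j ∈ range (n+1), C (gam n (i:ℤ) (j:ℤ)) * Bp (n+1) (i+1) j := by
  rw [Finset.sum_range_succ'
    (fun i => ∑ j ∈ range (n+2), C (gam n ((i:ℤ)-1) (j:ℤ)) * Bp (n+1) i j) (n+1)]
  have h0 : (∑ j ∈ range (n+2), C (gam n (((0:ℕ):ℤ)-1) (j:ℤ)) * Bp (n+1) 0 j) = 0 := by
    refine Finset.sum_eq_zero fun j hj => ?_
    rw [gam_neg (Or.inl (by norm_num)), map_zero, zero_mul]
  rw [h0, add_zero]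
  refine Finset.sum_congr rfl fun i hi => ?_
  have hshift : ∀ j ∈ range (n+2), C (gam n ((↑(i+1):ℤ)-1) (j:ℤ)) * Bp (n+1) (i+1) j
      = C (gam n (i:ℤ) (j:ℤ)) * Bp (n+1) (i+1) j := by
    intro j hj
    have : ((↑(i+1):ℤ)-1) = (i:ℤ) := by push_cast; ring
    rw [this]
  rw [Finset.sum_congr rfl hshift, Finset.sum_range_succ,
    gam_support n (i := (i:ℤ)) (j := ((n+1:ℕ):ℤ)) (by push_cast; omega), map_zero, zero_mul,
    add_zero]

lemma L2eq (n : ℕ) :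
    (∑ i ∈ range (n+2), ∑ j ∈ range (n+2),
        C ((1+(i:ℤ)) * gam n ((i:ℤ)+1) ((j:ℤ)-1)) * Bp (n+1) i j)
  = ∑ i ∈ range (n+1), ∑ j ∈ range (n+1),
        C (gam n (i:ℤ) (j:ℤ)) * ((i:R3) * Bp (n+1) (i-1) (j+1)) := by
  have inner : ∀ i : ℕ, (∑ j ∈ range (n+2),
      C ((1+(i:ℤ)) * gam n ((i:ℤ)+1) ((j:ℤ)-1)) * Bp (n+1) i j)
      = ∑ j ∈ range (n+1), C ((1+(i:ℤ)) * gam n ((i:ℤ)+1) (j:ℤ)) * Bp (n+1) i (j+1) := by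
    intro i
    rw [Finset.sum_range_succ'
      (fun j => C ((1+(i:ℤ)) * gam n ((i:ℤ)+1) ((j:ℤ)-1)) * Bp (n+1) i j) (n+1)]
    rw [gam_neg (Or.inr (by norm_num)), mul_zero, map_zero, zero_mul, add_zero]
    refine Finset.sum_congr rfl fun j hj => ?_
    have : ((↑(j+1):ℤ)-1) = (j:ℤ) := by push_cast; ring
    rw [this]
  rw [Finset.sum_congr rfl (fun i _ => inner i)]
  rw [Finset.sum_range_succ, Finset.sum_range_succ]
  have htop : ∀ i : ℕ, n ≤ i → (∑ j ∈ range (n+1),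
      C ((1+(i:ℤ)) * gam n ((i:ℤ)+1) (j:ℤ)) * Bp (n+1) i (j+1)) = 0 := by
    intro i hi
    refine Finset.sum_eq_zero fun j hj => ?_
    rw [gam_support n (by push_cast; omega), mul_zero, map_zero, zero_mul]
  rw [htop _ (by omega), htop _ (by omega), add_zero, add_zero]
  rw [Finset.sum_range_succ'
    (fun i => ∑ j ∈ range (n+1), C (gam n (i:ℤ) (j:ℤ)) * ((i:R3) * Bp (n+1) (i-1) (j+1))) n]
  have h0 : (∑ j ∈ range (n+1),
      C (gam n ((0:ℕ):ℤ) (j:ℤ)) * (((0:ℕ):R3) * Bp (n+1) (0-1) (j+1))) = 0 := by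
    refine Finset.sum_eq_zero fun j hj => ?_
    norm_num
  rw [h0, add_zero]
  refine Finset.sum_congr rfl fun i hi => ?_
  refine Finset.sum_congr rfl fun j hj => ?_
  have hC : C ((1+(i:ℤ)) * gam n ((i:ℤ)+1) (j:ℤ))
      = (1 + (i:R3)) * C (gam n ((i:ℤ)+1) (j:ℤ)) := by
    rw [map_mul, map_add, map_one, map_natCast]
  rw [hC]
  have e1 : ((↑(i+1):ℤ)) = (i:ℤ)+1 := by push_cast; ring
  rw [e1]
  simp only [Nat.add_sub_cancel]
  push_cast
  ring

lemma L3eq (n : ℕ) :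
    (∑ i ∈ range (n+2), ∑ j ∈ range (n+2), C ((j:ℤ) * gam n (i:ℤ) (j:ℤ)) * Bp (n+1) i j)
  = ∑ i ∈ range (n+1), ∑ j ∈ range (n+1),
        C (gam n (i:ℤ) (j:ℤ)) * ((j:R3) * Bp (n+1) i j) := by
  rw [Finset.sum_range_succ]
  have htop : (∑ j ∈ range (n+2), C ((j:ℤ) * gam n ((n+1:ℕ):ℤ) (j:ℤ)) * Bp (n+1) (n+1) j) = 0 := by
    refine Finset.sum_eq_zero fun j hj => ?_
    rw [gam_support n (by push_cast; omega), mul_zero, map_zero, zero_mul]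
  rw [htop, add_zero]
  refine Finset.sum_congr rfl fun i hi => ?_
  rw [Finset.sum_range_succ]
  simp only [mem_range] at hi
  rw [gam_support n (i := (i:ℤ)) (j := ((n+1:ℕ):ℤ)) (by push_cast; omega), mul_zero, map_zero,
    zero_mul, add_zero]
  refine Finset.sum_congr rfl fun j hj => ?_
  rw [map_mul, map_natCast]
  ring

lemma L4eq (n : ℕ) :
    (∑ i ∈ range (n+2), ∑ j ∈ range (n+2),
        C (((n:ℤ) - i - 2*j + 2) * gam n (i:ℤ) ((j:ℤ)-1)) * Bp (n+1) i j)
  = ∑ i ∈ range (n+1), ∑ j ∈ range (n+1),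
        C (gam n (i:ℤ) (j:ℤ)) * (((n - i - 2*j : ℕ) : R3) * Bp (n+1) i (j+1)) := by
  have inner : ∀ i : ℕ, (∑ j ∈ range (n+2),
      C (((n:ℤ) - i - 2*j + 2) * gam n (i:ℤ) ((j:ℤ)-1)) * Bp (n+1) i j)
      = ∑ j ∈ range (n+1), C (((n:ℤ) - i - 2*j) * gam n (i:ℤ) (j:ℤ)) * Bp (n+1) i (j+1) := by
    intro i
    rw [Finset.sum_range_succ'
      (fun j => C (((n:ℤ) - i - 2*j + 2) * gam n (i:ℤ) ((j:ℤ)-1)) * Bp (n+1) i j) (n+1)]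
    rw [gam_neg (Or.inr (by norm_num)), mul_zero, map_zero, zero_mul, add_zero]
    refine Finset.sum_congr rfl fun j hj => ?_
    have h1 : ((↑(j+1):ℤ)-1) = (j:ℤ) := by push_cast; ring
    have h2 : ((n:ℤ) - i - 2*(↑(j+1):ℤ) + 2) = (n:ℤ) - i - 2*j := by push_cast; ring
    rw [h1, h2]
  rw [Finset.sum_congr rfl (fun i _ => inner i)]
  rw [Finset.sum_range_succ]
  have htop : (∑ j ∈ range (n+1),
      C (((n:ℤ) - (↑(n+1):ℤ) - 2*j) * gam n ((n+1:ℕ):ℤ) (j:ℤ)) * Bp (n+1) (n+1) (j+1)) = 0 := by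
    refine Finset.sum_eq_zero fun j hj => ?_
    rw [gam_support n (by push_cast; omega), mul_zero, map_zero, zero_mul]
  rw [htop, add_zero]
  refine Finset.sum_congr rfl fun i hi => ?_
  refine Finset.sum_congr rfl fun j hj => ?_
  simp only [mem_range] at hi hj
  by_cases hij : i + 2*j ≤ n
  · have hcast : ((n - i - 2*j : ℕ) : ℤ) = (n:ℤ) - i - 2*j := by push_cast; omega
    rw [← hcast, map_mul, map_natCast]
    ring
  · rw [gam_support' n i j (by omega)]
    simp

lemma Srect_step (n : ℕ) :
    (X 1 + X 2) * Srect n + X 0 * X 1 * Δ (Srect n) = Srect (n+1) := by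
  have lhs_eq : (X 1 + X 2) * Srect n + X 0 * X 1 * Δ (Srect n) =
      ∑ i ∈ range (n+1), ∑ j ∈ range (n+1), C (gam n i j) *
        (Bp (n+1) (i+1) j + (i : R3) * Bp (n+1) (i-1) (j+1) + (j : R3) * Bp (n+1) i j +
          ((n - i - 2*j : ℕ) : R3) * Bp (n+1) i (j+1)) := by
    rw [Srect, Finset.mul_sum, Δ_sum, Finset.mul_sum, ← Finset.sum_add_distrib]
    refine Finset.sum_congr rfl fun i hi => ?_
    rw [Finset.mul_sum, Δ_sum, Finset.mul_sum, ← Finset.sum_add_distrib]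
    refine Finset.sum_congr rfl fun j hj => ?_
    simp only [mem_range] at hi hj
    rw [Δ_C_mul]
    by_cases hij : i + 2*j ≤ n
    · rw [← step_term n i j hij]; ring
    · rw [gam_support' n i j (by omega)]; simp
  rw [lhs_eq]
  have split : (∑ i ∈ range (n+1), ∑ j ∈ range (n+1), C (gam n i j) *
        (Bp (n+1) (i+1) j + (i : R3) * Bp (n+1) (i-1) (j+1) + (j : R3) * Bp (n+1) i j +
          ((n - i - 2*j : ℕ) : R3) * Bp (n+1) i (j+1)))
      = (∑ i ∈ range (n+1), ∑ j ∈ range (n+1), C (gam n (i:ℤ) (j:ℤ)) * Bp (n+1) (i+1) j)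
      + (∑ i ∈ range (n+1), ∑ j ∈ range (n+1),
          C (gam n (i:ℤ) (j:ℤ)) * ((i:R3) * Bp (n+1) (i-1) (j+1)))
      + (∑ i ∈ range (n+1), ∑ j ∈ range (n+1),
          C (gam n (i:ℤ) (j:ℤ)) * ((j:R3) * Bp (n+1) i j))
      + (∑ i ∈ range (n+1), ∑ j ∈ range (n+1),
          C (gam n (i:ℤ) (j:ℤ)) * (((n - i - 2*j:ℕ):R3) * Bp (n+1) i (j+1))) := by
    rw [← Finset.sum_add_distrib, ← Finset.sum_add_distrib, ← Finset.sum_add_distrib]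
    refine Finset.sum_congr rfl fun i _ => ?_
    rw [← Finset.sum_add_distrib, ← Finset.sum_add_distrib, ← Finset.sum_add_distrib]
    refine Finset.sum_congr rfl fun j _ => ?_
    ring
  rw [split, ← L1eq, ← L2eq, ← L3eq, ← L4eq, Srect]
  rw [← Finset.sum_add_distrib, ← Finset.sum_add_distrib, ← Finset.sum_add_distrib]
  refine Finset.sum_congr rfl fun i _ => ?_
  rw [← Finset.sum_add_distrib, ← Finset.sum_add_distrib, ← Finset.sum_add_distrib]
  refine Finset.sum_congr rfl fun j _ => ?_
  rw [gam_succ n i j (Int.natCast_nonneg i) (Int.natCast_nonneg j)]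
  rw [map_add, map_add, map_add, add_mul, add_mul, add_mul]
  ring

lemma base0 : trivEuler 1 = Srect 0 := by
  have h1 : trivEuler 1 = 1 := by
    rw [trivEuler]
    have hc : ∀ π : Equiv.Perm (Fin 1),
        X 0 ^ bascNum π * X 1 ^ desNum π * X 2 ^ sucNum π = (1:R3) := by
      intro π
      simp [bascNum, desNum, sucNum]
    rw [Fintype.sum_congr _ _ hc]
    simp
  have h2 : Srect 0 = 1 := by
    rw [Srect]
    simp [Bp, gam]
  rw [h1, h2]

lemma key (n : ℕ) : trivEuler (n+1) = Srect n := by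
  induction n with
  | zero => exact base0
  | succ m ih =>
    have : trivEuler (m + 2) = (X 1 + X 2) * trivEuler (m+1) + X 0 * X 1 * Δ (trivEuler (m+1)) :=
      recur m
    rw [show m + 1 + 1 = m + 2 from rfl, this, ih, Srect_step]

/-- `A_{n+1}(x,y,s) = Σ_{i=0}^n Σ_{j=0}^{⌊(n−i)/2⌋} γ_{n,i,j} (s+y)^i (2xy)^j (x+y)^{n−i−2j}`. -/
theorem stmt1 (n : ℕ) :
    trivEuler (n + 1) =
      ∑ i ∈ range (n + 1), ∑ j ∈ range ((n - i) / 2 + 1),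
        MvPolynomial.C (gam n i j) * (X 2 + X 1) ^ i *
          ((2 : MvPolynomial (Fin 3) ℤ) * X 0 * X 1) ^ j * (X 0 + X 1) ^ (n - i - 2 * j) := by
  rw [key n, ← triangle_eq_rect]
  refine Finset.sum_congr rfl fun i _ => Finset.sum_congr rfl fun j _ => ?_
  rw [Bp]
  ring
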